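/- Let α ∈ ℂ. Define C : ℕ × ℕ → ℂ by C_{k,j} = Σ_{m=0}^{min(k,j)} conj(α)^{k−m} · α^{j−m}. Then for all k, j ∈ ℕ: (1 + |α|²)·C_{k,j} − α·C_{k+1,j} − (conj(α)·C_{k−1,j} if k ≥ 1, else 0) equals 1 if k = j and 0 otherwise. In other words, the infinite tridiagonal Toeplitz matrix B with entries B_{k,l} = 1 + |α|² if l = k, B_{k,l} = −conj(α) if l = k − 1, B_{k,l} = −α if l = k + 1, and 0 otherwise, satisfies B·C = I entrywise. -/

import Mathlib

open Finset in
lemma tridiag_aux (α : ℂ) (C : ℕ → ℕ → ℂ)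
    (hC : ∀ k j : ℕ, C k j =
      ∑ m ∈ range (min k j + 1), ((starRingEnd ℂ) α) ^ (k - m) * α ^ (j - m))
    (k j : ℕ) :
    C (k + 1) j = (starRingEnd ℂ) α * C k j
      + (if k + 1 ≤ j then α ^ (j - (k + 1)) else 0) := by
  rw [hC, hC]
  rcases le_or_gt j k with h | h
  · rw [min_eq_right (by omega), min_eq_right h, if_neg (by omega), add_zero,
      Finset.mul_sum]
    refine Finset.sum_congr rfl fun m hm => ?_
    simp only [Finset.mem_range] at hm
    rw [← mul_assoc, ← pow_succ']
    congr 2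
    omega
  · rw [min_eq_left (by omega), min_eq_left (by omega), Finset.sum_range_succ,
      if_pos (by omega), Finset.mul_sum]
    congr 1
    · refine Finset.sum_congr rfl fun m hm => ?_
      simp only [Finset.mem_range] at hm
      rw [← mul_assoc, ← pow_succ']
      congr 2
      omega
    · simp

open Finset in
/-- For `α : ℂ`, the matrix `C_{k,j} = ∑_{m=0}^{min k j} conj(α)^{k-m} * α^{j-m}`
is a right inverse of the tridiagonal Toeplitz matrix `B` with diagonal `1 + |α|²`,
subdiagonal `-conj α` and superdiagonal `-α`: entrywise,
`(1 + |α|²) C_{k,j} - α C_{k+1,j} - conj α C_{k-1,j} = δ_{k,j}`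
(the last term being absent when `k = 0`). -/
theorem tridiagonal_inverse (α : ℂ) (C : ℕ → ℕ → ℂ)
    (hC : ∀ k j : ℕ, C k j =
      ∑ m ∈ range (min k j + 1), ((starRingEnd ℂ) α) ^ (k - m) * α ^ (j - m)) :
    ∀ k j : ℕ,
      (1 + ((‖α‖ : ℝ) : ℂ) ^ 2) * C k j - α * C (k + 1) j
        - (if 1 ≤ k then (starRingEnd ℂ) α * C (k - 1) j else 0)
      = if k = j then 1 else 0 := by
  have habs : (((‖α‖ : ℝ) : ℂ)) ^ 2 = α * (starRingEnd ℂ) α := by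
    rw [← Complex.ofReal_pow, Complex.sq_norm, Complex.mul_conj]
  intro k j
  cases k with
  | zero =>
    have h0 : C 0 j = α ^ j := by
      rw [hC]; simp
    rw [tridiag_aux α C hC 0 j, h0, habs]
    simp only [Nat.lt_one_iff, if_neg (by omega : ¬ 1 ≤ 0), sub_zero]
    by_cases hj : 0 + 1 ≤ j
    · rw [if_pos hj, if_neg (by omega)]
      have : α * α ^ (j - (0 + 1)) = α ^ j := by
        rw [← pow_succ']; congr 1; omega
      ring_nf
      ring_nf at this
      linear_combination -this
    · rw [if_neg hj, if_pos (by omega)]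
      have : j = 0 := by omega
      subst this
      ring
  | succ n =>
    rw [tridiag_aux α C hC (n + 1) j, tridiag_aux α C hC n j, habs,
      if_pos (by omega : 1 ≤ n + 1)]
    simp only [Nat.add_sub_cancel]
    by_cases h1 : n + 1 ≤ j
    · rw [if_pos h1]
      by_cases h2 : n + 1 + 1 ≤ j
      · rw [if_pos h2, if_neg (by omega)]
        have : α * α ^ (j - (n + 1 + 1)) = α ^ (j - (n + 1)) := by
          rw [← pow_succ']; congr 1; omega
        ring_nf
        ring_nf at this
        linear_combination -this
      · rw [if_neg h2, if_pos (by omega), show j - (n + 1) = 0 by omega, pow_zero]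
        ring
    · rw [if_neg h1, if_neg (by omega), if_neg (by omega)]
      ring
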